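/- Let δ ≥ 1 be real, t > 0, u > 0 and x ∈ ℝ. Then exp(−t x²/2) · j_{δ/2−1}(u x) = ∫₀^∞ j_{δ/2−1}(x y) · p_t(u, y) dy, where p_t is the BES(δ) transition density. (This is the intertwining identity exp(−t|x|²/2) η_u^{(δ)}(−x) = ∫₀^∞ η_v^{(δ)}(−x) p_t(u, dv) identifying the radial restriction of the heat semigroup as the δ-dimensional Bessel semigroup.) -/

import Mathlib

open Real MeasureTheory

/-- Normalized spherical Bessel function `j_ν(z)`. -/
noncomputable def sphBessel (ν : ℝ) (z : ℝ) : ℝ :=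
  Real.Gamma (ν + 1) *
    ∑' m : ℕ, (-1 : ℝ) ^ m * (z / 2) ^ (2 * m) /
      (Nat.factorial m * Real.Gamma (ν + m + 1))

/-- Imaginary-argument normalized spherical Bessel function `ĵ_ν(z) = j_ν(iz)`. -/
noncomputable def sphBesselI (ν : ℝ) (z : ℝ) : ℝ :=
  Real.Gamma (ν + 1) *
    ∑' m : ℕ, (z / 2) ^ (2 * m) / (Nat.factorial m * Real.Gamma (ν + m + 1))

/-- Transition density `p_t(x,y)` of the `δ`-dimensional Bessel process BES(δ). -/
noncomputable def besselDensity (δ t x y : ℝ) : ℝ :=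
  2 * y ^ (δ - 1) * (2 * t) ^ (-(δ / 2)) / Real.Gamma (δ / 2) *
    sphBesselI (δ / 2 - 1) (x * y / t) * Real.exp (-(x ^ 2 + y ^ 2) / (2 * t))

noncomputable def ccB (s : ℝ) (m : ℕ) : ℝ := ((m.factorial : ℝ) * Real.Gamma (s + m))⁻¹

lemma ccB_pos {s : ℝ} (hs : 0 < s) (m : ℕ) : 0 < ccB s m := by
  have h1 : (0:ℝ) < m.factorial := by exact_mod_cast m.factorial_pos
  have h2 : 0 < Real.Gamma (s + m) := Real.Gamma_pos_of_pos (by positivity)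
  exact inv_pos.mpr (by positivity)

lemma ccB_succ {s : ℝ} (hs : 0 < s) (m : ℕ) :
    ccB s (m + 1) = ccB s m / ((m + 1) * (s + m)) := by
  have h0 : s + (m:ℝ) ≠ 0 := by positivity
  have hg : Real.Gamma (s + (m + 1 : ℕ)) = (s + m) * Real.Gamma (s + m) := by
    rw [show s + ((m : ℕ) + 1 : ℕ) = (s + m) + 1 by push_cast; ring]
    exact Real.Gamma_add_one h0
  unfold ccB
  rw [hg, Nat.factorial_succ]
  have h1 : ((m:ℝ)) + 1 ≠ 0 := by positivity
  have h2 : (m.factorial : ℝ) ≠ 0 := by exact_mod_cast m.factorial_ne_zero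
  have h3 : Real.Gamma (s + m) ≠ 0 := (Real.Gamma_pos_of_pos (by positivity)).ne'
  push_cast
  field_simp

lemma summable_pow_mul_ccB {s : ℝ} (hs : 0 < s) (w : ℝ) :
    Summable (fun m : ℕ => w ^ m * ccB s m) := by
  apply summable_of_ratio_norm_eventually_le (r := 1/2) (by norm_num)
  filter_upwards [Filter.eventually_ge_atTop (⌈2 * |w|⌉₊ + 1)] with m hm
  have hm1 : (2 : ℝ) * |w| ≤ m := le_trans (Nat.le_ceil _) (by exact_mod_cast Nat.le_of_succ_le hm)
  have hm0 : 1 ≤ m := le_trans (Nat.le_add_left 1 _) hm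
  have hcp := ccB_pos hs m
  have hcp1 := ccB_pos hs (m+1)
  rw [ccB_succ hs m]
  have hpos : (0:ℝ) < ((m:ℝ)+1) * (s + m) := by positivity
  rw [norm_mul, norm_mul, Real.norm_eq_abs, Real.norm_eq_abs, Real.norm_eq_abs,
    Real.norm_eq_abs, abs_of_pos hcp, abs_div, abs_of_pos hcp, abs_of_pos hpos,
    pow_succ, abs_mul]
  rw [div_eq_mul_inv]
  have key : |w| * (((m:ℝ)+1) * (s + m))⁻¹ ≤ 1/2 := by
    rw [mul_inv_le_iff₀ hpos]
    have h1 : (1:ℝ) ≤ (m:ℝ) + 1 := by have := Nat.cast_nonneg (α := ℝ) m; linarith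
    have h2 : (m:ℝ) ≤ s + m := by linarith
    nlinarith [abs_nonneg w, pow_nonneg (abs_nonneg w) m]
  calc |w ^ m| * |w| * (ccB s m * (((m:ℝ)+1) * (s + m))⁻¹)
      = (|w| * (((m:ℝ)+1) * (s + m))⁻¹) * (|w ^ m| * ccB s m) := by ring
    _ ≤ (1/2) * (|w ^ m| * ccB s m) := by
        exact mul_le_mul_of_nonneg_right key (mul_nonneg (abs_nonneg _) hcp.le)

lemma GammaCV : ∀ (m : ℕ) (s : ℝ), 0 < s → ∀ (k : ℕ),
    ∑ n ∈ Finset.range (m + 1),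
      (m.choose n : ℝ) * (k.choose n) * (n.factorial) / Real.Gamma (s + n)
    = Real.Gamma (s + m + k) / (Real.Gamma (s + m) * Real.Gamma (s + k)) := by
  intro m
  induction m with
  | zero =>
    intro s hs k
    simp only [Finset.sum_range_one, Nat.choose_self, Nat.choose_zero_right, Nat.cast_one,
      Nat.factorial_zero, Nat.cast_zero, add_zero, zero_add]
    have h1 : Real.Gamma s ≠ 0 := (Real.Gamma_pos_of_pos hs).ne'
    have h2 : Real.Gamma (s + k) ≠ 0 := (Real.Gamma_pos_of_pos (by positivity)).ne'
    field_simp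
  | succ m IH =>
    intro s hs k
    have hs1 : (0:ℝ) < s + 1 := by linarith
    -- auxiliary: g n
    set g : ℕ → ℝ := fun n => (k.choose n : ℝ) * (n.factorial) / Real.Gamma (s + n) with hg
    have hstep : ∀ n : ℕ, g n + g (n + 1)
        = (s + k) * ((k.choose n : ℝ) * (n.factorial) / Real.Gamma ((s+1) + n)) := by
      intro n
      have hGn : Real.Gamma (s + (n+1:ℕ)) = (s + n) * Real.Gamma (s + n) := by
        rw [show s + ((n:ℕ)+1:ℕ) = (s + n) + 1 by push_cast; ring]
        exact Real.Gamma_add_one (by positivity)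
      have hchoose : ((k.choose (n+1) : ℝ)) * (n+1) = (k.choose n : ℝ) * ((k:ℝ) - n) := by
        rcases le_or_gt (n+1) k with h | h
        · have := Nat.choose_succ_right_eq k n
          have hcast : ((k.choose (n+1) * (n+1) : ℕ) : ℝ) = ((k.choose n * (k - n) : ℕ) : ℝ) := by
            exact_mod_cast congrArg (Nat.cast (R := ℝ)) this
          push_cast [Nat.cast_sub (by omega : n ≤ k)] at hcast
          linarith [hcast]
        · rw [Nat.choose_eq_zero_of_lt h]
          rcases lt_or_ge k n with h2 | h2
          · rw [Nat.choose_eq_zero_of_lt h2]; simp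
          · have : n = k := by omega
            subst this; simp
      have hGpos : (0:ℝ) < Real.Gamma (s + n) := Real.Gamma_pos_of_pos (by positivity)
      have hGpos1 : (0:ℝ) < Real.Gamma (s + (n+1:ℕ)) := Real.Gamma_pos_of_pos (by positivity)
      have harg : (s+1) + (n:ℝ) = s + ((n+1:ℕ):ℝ) := by push_cast; ring
      rw [hg]
      simp only []
      rw [harg, hGn]
      have hfact : ((n+1:ℕ).factorial : ℝ) = ((n:ℝ)+1) * (n.factorial) := by
        rw [Nat.factorial_succ]; push_cast; ring
      have hsn : s + (n:ℝ) ≠ 0 := by positivity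
      rw [hfact, show (k.choose (n+1) : ℝ) * (((n:ℝ)+1) * (n.factorial))
        = ((k.choose (n+1) : ℝ) * ((n:ℝ)+1)) * (n.factorial) by ring, hchoose]
      field_simp
      ring
    have hG1 : Real.Gamma (s + 1 + k) = (s + k) * Real.Gamma (s + k) := by
      rw [show s + 1 + (k:ℝ) = (s + (k:ℝ)) + 1 by ring]
      exact Real.Gamma_add_one (by positivity)
    have hLHS : ∑ n ∈ Finset.range (m+1+1),
        ((m+1).choose n : ℝ) * (k.choose n) * (n.factorial) / Real.Gamma (s+n)
        = ∑ n ∈ Finset.range (m+1), (m.choose n : ℝ) * (g n + g (n+1)) := by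
      have e0 : ∀ n : ℕ, ((m+1).choose n : ℝ) * (k.choose n) * (n.factorial) / Real.Gamma (s+n)
          = ((m+1).choose n : ℝ) * g n := fun n => by rw [hg]; ring
      simp_rw [e0]
      rw [Finset.sum_range_succ']
      have e1 : ∀ i : ℕ, ((m+1).choose (i+1) : ℝ) * g (i+1)
          = (m.choose i : ℝ) * g (i+1) + (m.choose (i+1) : ℝ) * g (i+1) := by
        intro i
        rw [show ((m+1).choose (i+1) : ℝ) = (m.choose i : ℝ) + (m.choose (i+1) : ℝ) by
          exact_mod_cast Nat.choose_succ_succ m i]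
        ring
      simp_rw [e1, Finset.sum_add_distrib]
      have e2 : (∑ i ∈ Finset.range (m+1), (m.choose (i+1) : ℝ) * g (i+1))
            + ((m+1).choose 0 : ℝ) * g 0
          = ∑ n ∈ Finset.range (m+1), (m.choose n : ℝ) * g n := by
        rw [show (((m+1).choose 0 : ℕ) : ℝ) * g 0 = ((m.choose 0 : ℕ) : ℝ) * g 0 by norm_num]
        rw [← Finset.sum_range_succ' (fun n => (m.choose n : ℝ) * g n) (m+1)]
        rw [Finset.sum_range_succ]
        simp [Nat.choose_succ_self]
      rw [add_assoc, e2, ← Finset.sum_add_distrib]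
      exact Finset.sum_congr rfl fun n _ => by ring
    rw [hLHS]
    have e3 : ∀ n : ℕ, (m.choose n : ℝ) * (g n + g (n+1))
        = (s+k) * ((m.choose n : ℝ) * (k.choose n : ℝ) * (n.factorial) / Real.Gamma ((s+1)+n)) := by
      intro n; rw [hstep n]; ring
    simp_rw [e3, ← Finset.mul_sum]
    rw [IH (s+1) hs1 k]
    rw [show s + 1 + (m:ℝ) + (k:ℝ) = s + ((m+1:ℕ):ℝ) + k by push_cast; ring,
      show s + 1 + (m:ℝ) = s + ((m+1:ℕ):ℝ) by push_cast; ring, hG1]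
    have n1 : Real.Gamma (s + ((m+1:ℕ):ℝ)) ≠ 0 := by
      have : (0:ℝ) < s + ((m+1:ℕ):ℝ) := by positivity
      exact (Real.Gamma_pos_of_pos this).ne'
    have n2 : Real.Gamma (s + (k:ℝ)) ≠ 0 := (Real.Gamma_pos_of_pos (by positivity)).ne'
    have n3 : s + (k:ℝ) ≠ 0 := by positivity
    field_simp

lemma GammaCV' (s : ℝ) (hs : 0 < s) (m k : ℕ) :
    ∑ n ∈ Finset.range (min m k + 1),
      (((m-n).factorial : ℝ) * ((k-n).factorial) * (n.factorial) * Real.Gamma (s + n))⁻¹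
    = Real.Gamma (s + m + k) /
        ((m.factorial : ℝ) * (k.factorial) * Real.Gamma (s + m) * Real.Gamma (s + k)) := by
  have hmmt : ∀ n ∈ Finset.range (min m k + 1),
      (m.choose n : ℝ) * (k.choose n) * (n.factorial) / Real.Gamma (s + n)
      = (m.factorial : ℝ) * (k.factorial) *
        (((m-n).factorial : ℝ) * ((k-n).factorial) * (n.factorial) * Real.Gamma (s + n))⁻¹ := by
    intro n hn
    rw [Finset.mem_range] at hn
    have hnm : n ≤ m := by omega
    have hnk : n ≤ k := by omega
    have e1 : (m.choose n : ℝ) * (n.factorial) * ((m-n).factorial) = (m.factorial : ℝ) := by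
      exact_mod_cast Nat.choose_mul_factorial_mul_factorial hnm
    have e2 : (k.choose n : ℝ) * (n.factorial) * ((k-n).factorial) = (k.factorial : ℝ) := by
      exact_mod_cast Nat.choose_mul_factorial_mul_factorial hnk
    rw [← e1, ← e2]
    have f1 : ((m-n).factorial : ℝ) ≠ 0 := by exact_mod_cast (m-n).factorial_ne_zero
    have f2 : ((k-n).factorial : ℝ) ≠ 0 := by exact_mod_cast (k-n).factorial_ne_zero
    have f3 : ((n).factorial : ℝ) ≠ 0 := by exact_mod_cast n.factorial_ne_zero
    have f4 : Real.Gamma (s + n) ≠ 0 := (Real.Gamma_pos_of_pos (by positivity)).ne'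
    field_simp
  have hsub : ∑ n ∈ Finset.range (m+1),
      (m.choose n : ℝ) * (k.choose n) * (n.factorial) / Real.Gamma (s + n)
      = ∑ n ∈ Finset.range (min m k + 1),
      (m.choose n : ℝ) * (k.choose n) * (n.factorial) / Real.Gamma (s + n) := by
    symm
    apply Finset.sum_subset
    · intro n hn
      rw [Finset.mem_range] at *
      omega
    · intro n hn hnot
      rw [Finset.mem_range] at *
      have : k < n := by omega
      rw [Nat.choose_eq_zero_of_lt this]
      simp
  have key := GammaCV m s hs k
  rw [hsub, Finset.sum_congr rfl hmmt, ← Finset.mul_sum] at key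
  have hX : (m.factorial : ℝ) * (k.factorial) ≠ 0 := by
    have f1 : ((m).factorial : ℝ) ≠ 0 := by exact_mod_cast m.factorial_ne_zero
    have f2 : ((k).factorial : ℝ) ≠ 0 := by exact_mod_cast k.factorial_ne_zero
    exact mul_ne_zero f1 f2
  apply mul_left_cancel₀ hX
  rw [key]
  have hGm : Real.Gamma (s + m) ≠ 0 := (Real.Gamma_pos_of_pos (by positivity)).ne'
  have hGk : Real.Gamma (s + k) ≠ 0 := (Real.Gamma_pos_of_pos (by positivity)).ne'
  field_simp

lemma summable_norm_pow_mul_ccB {s : ℝ} (hs : 0 < s) (w : ℝ) :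
    Summable (fun m : ℕ => ‖w ^ m * ccB s m‖) := by
  refine (summable_pow_mul_ccB hs |w|).congr fun m => ?_
  rw [norm_mul, Real.norm_eq_abs, Real.norm_eq_abs, abs_pow,
    abs_of_pos (ccB_pos hs m)]

lemma summable_norm_pow_div_factorial (w : ℝ) :
    Summable (fun p : ℕ => ‖w ^ p / p.factorial‖) := by
  refine (Real.summable_pow_div_factorial |w|).congr fun p => ?_
  rw [norm_div, norm_pow, Real.norm_eq_abs, Real.norm_natCast]

set_option maxHeartbeats 1000000 in
lemma besselKey {s : ℝ} (hs : 0 < s) (a b : ℝ) :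
    HasSum (fun mk : ℕ × ℕ => a ^ mk.1 * b ^ mk.2 *
      (Real.Gamma (s + mk.1 + mk.2) /
        ((mk.1.factorial : ℝ) * (mk.2.factorial) * Real.Gamma (s + mk.1) *
          Real.Gamma (s + mk.2))))
      (Real.exp a * (Real.exp b * ∑' n : ℕ, (a*b) ^ n * ccB s n)) := by
  have S1 := summable_norm_pow_div_factorial a
  have S2 := summable_norm_pow_div_factorial b
  have S3 := summable_norm_pow_mul_ccB hs (a*b)
  set F : ℕ × ℕ × ℕ → ℝ := fun x =>
    a ^ x.1 / x.1.factorial * (b ^ x.2.1 / x.2.1.factorial * ((a*b) ^ x.2.2 * ccB s x.2.2))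
    with hF
  have Sin : Summable fun w : ℕ × ℕ =>
      ‖b ^ w.1 / w.1.factorial * ((a*b) ^ w.2 * ccB s w.2)‖ := by
    have h := summable_mul_of_summable_norm (f := fun q : ℕ => ‖b ^ q / q.factorial‖)
      (g := fun n : ℕ => ‖(a*b) ^ n * ccB s n‖) (by simpa using S2) (by simpa using S3)
    refine h.congr fun w => ?_
    simp only [norm_mul]
  have hsumF : Summable F := summable_mul_of_summable_norm S1 Sin
  have hVal : Real.exp a * (Real.exp b * ∑' n : ℕ, (a*b) ^ n * ccB s n)
      = ∑' x : ℕ × ℕ × ℕ, F x := by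
    rw [Real.exp_eq_exp_ℝ, NormedSpace.exp_eq_tsum_div]
    rw [tsum_mul_tsum_of_summable_norm S2 S3, tsum_mul_tsum_of_summable_norm S1 Sin]
  set F' : (ℕ × ℕ) × ℕ → ℝ := fun z =>
    if z.2 ≤ z.1.1 ∧ z.2 ≤ z.1.2 then F (z.1.1 - z.2, z.1.2 - z.2, z.2) else 0 with hF'
  have hcond : ∀ z : Function.support F', z.1.2 ≤ z.1.1.1 ∧ z.1.2 ≤ z.1.1.2 := by
    rintro ⟨z, hz⟩
    by_contra h
    exact hz (if_neg h)
  set i : Function.support F' → ℕ × ℕ × ℕ :=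
    fun z => (z.1.1.1 - z.1.2, z.1.1.2 - z.1.2, z.1.2) with hi_def
  have hi : Function.Injective i := by
    rintro ⟨⟨⟨m, k⟩, n⟩, hz⟩ ⟨⟨⟨m', k'⟩, n'⟩, hz'⟩ h
    obtain ⟨h1, h2⟩ := hcond ⟨((m,k),n), hz⟩
    obtain ⟨h1', h2'⟩ := hcond ⟨((m',k'),n'), hz'⟩
    simp only [hi_def, Prod.mk.injEq] at h h1 h2 h1' h2' ⊢
    apply Subtype.ext
    simp only [Prod.mk.injEq]
    omega
  have hrange : Function.support F ⊆ Set.range i := by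
    rintro ⟨p, q, n⟩ hx
    have hmem : ((p + n, q + n), n) ∈ Function.support F' := by
      simp only [hF', Function.mem_support]
      rw [if_pos ⟨Nat.le_add_left n p, Nat.le_add_left n q⟩]
      simpa [Nat.add_sub_cancel] using hx
    refine ⟨⟨((p + n, q + n), n), hmem⟩, ?_⟩
    simp [hi_def, Nat.add_sub_cancel]
  have hfg : ∀ z : Function.support F', F (i z) = F' z := by
    rintro ⟨⟨⟨m, k⟩, n⟩, hz⟩
    obtain ⟨h1, h2⟩ := hcond ⟨((m,k),n), hz⟩
    simp only [hi_def, hF']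
    rw [if_pos ⟨h1, h2⟩]
  have htsum : ∑' x, F x = ∑' z, F' z := tsum_eq_tsum_of_ne_zero_bij i hi hrange hfg
  have hsumF' : Summable F' := by
    obtain ⟨A, hA⟩ := hsumF
    exact ⟨A, (hasSum_iff_hasSum_of_ne_zero_bij i hi hrange hfg).mp hA⟩
  have hfib : ∀ mk : ℕ × ℕ, HasSum (fun n => F' (mk, n))
      (a ^ mk.1 * b ^ mk.2 * (Real.Gamma (s + mk.1 + mk.2) /
        ((mk.1.factorial : ℝ) * (mk.2.factorial) * Real.Gamma (s + mk.1) *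
          Real.Gamma (s + mk.2)))) := by
    rintro ⟨m, k⟩
    have hfin : HasSum (fun n => F' ((m, k), n))
        (∑ n ∈ Finset.range (min m k + 1), F' ((m, k), n)) := by
      apply hasSum_sum_of_ne_finset_zero
      intro n hn
      rw [Finset.mem_range] at hn
      exact if_neg (by simp only [Prod.fst, Prod.snd]; omega)
    have heq : ∑ n ∈ Finset.range (min m k + 1), F' ((m, k), n)
        = a ^ m * b ^ k * (Real.Gamma (s + m + k) /
          ((m.factorial : ℝ) * (k.factorial) * Real.Gamma (s + m) * Real.Gamma (s + k))) := by
      rw [← GammaCV' s hs m k, Finset.mul_sum]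
      apply Finset.sum_congr rfl
      intro n hn
      rw [Finset.mem_range] at hn
      have hnm : n ≤ m := by omega
      have hnk : n ≤ k := by omega
      simp only [hF', hF]
      rw [if_pos ⟨hnm, hnk⟩]
      have ham : a ^ (m - n) * a ^ n = a ^ m := by rw [← pow_add]; congr 1; omega
      have hbk : b ^ (k - n) * b ^ n = b ^ k := by rw [← pow_add]; congr 1; omega
      rw [mul_pow a b n, ccB, ← ham, ← hbk]
      ring
    exact heq ▸ hfin
  have hA' : HasSum F' (Real.exp a * (Real.exp b * ∑' n : ℕ, (a*b) ^ n * ccB s n)) := by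
    rw [hVal, htsum]
    exact hsumF'.hasSum
  exact HasSum.prod_fiberwise hA' hfib

lemma sphBessel_eq (s z : ℝ) :
    sphBessel (s - 1) z = Real.Gamma s * ∑' m : ℕ, (-(z/2)^2) ^ m * ccB s m := by
  unfold sphBessel
  rw [show s - 1 + 1 = s by ring]
  congr 1
  apply tsum_congr
  intro m
  rw [show s - 1 + (m:ℝ) + 1 = s + m by ring]
  simp only [ccB]
  rw [neg_pow ((z/2)^2) m, ← pow_mul, div_eq_mul_inv]

lemma sphBesselI_eq (s z : ℝ) :
    sphBesselI (s - 1) z = Real.Gamma s * ∑' m : ℕ, ((z/2)^2) ^ m * ccB s m := by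
  unfold sphBesselI
  rw [show s - 1 + 1 = s by ring]
  congr 1
  apply tsum_congr
  intro m
  rw [show s - 1 + (m:ℝ) + 1 = s + m by ring]
  simp only [ccB]
  rw [← pow_mul, div_eq_mul_inv]

lemma besselMoment {δ t : ℝ} (hδ : 1 ≤ δ) (ht : 0 < t) (n : ℕ) :
    ∫ y in Set.Ioi (0:ℝ), y ^ (δ - 1) * y ^ (2 * n) * Real.exp (-y ^ 2 / (2 * t))
      = (2 * t) ^ (δ / 2 + n) * (1 / 2) * Real.Gamma (δ / 2 + n) := by
  have h2t : (0:ℝ) < 2 * t := by linarith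
  have hn0 : (0:ℝ) ≤ (n:ℝ) := Nat.cast_nonneg n
  have hq : (-1:ℝ) < δ - 1 + 2 * n := by linarith
  have hb : (0:ℝ) < (2*t)⁻¹ := by positivity
  have base := integral_rpow_mul_exp_neg_mul_rpow (p := 2) (q := δ - 1 + 2*n)
    (b := (2*t)⁻¹) two_pos hq hb
  have hcong : ∀ y ∈ Set.Ioi (0:ℝ),
      y ^ (δ - 1) * y ^ (2 * n) * Real.exp (-y ^ 2 / (2 * t))
      = y ^ (δ - 1 + 2*(n:ℝ)) * Real.exp (-(2*t)⁻¹ * y ^ (2:ℝ)) := by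
    intro y hy
    rw [Set.mem_Ioi] at hy
    rw [Real.rpow_add hy, show ((2:ℝ)*(n:ℝ)) = ((2*n : ℕ):ℝ) by push_cast; ring,
      Real.rpow_natCast, Real.rpow_two]
    rw [show -(2*t)⁻¹ * y ^ (2:ℕ) = -y^2/(2*t) by field_simp]
  rw [setIntegral_congr_fun measurableSet_Ioi hcong, base]
  rw [show (-(δ - 1 + 2*(n:ℝ) + 1) / 2) = -(δ/2 + n) by ring,
    show ((δ - 1 + 2*(n:ℝ) + 1) / 2) = δ/2 + n by ring]
  rw [Real.inv_rpow h2t.le, Real.rpow_neg h2t.le, inv_inv]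

lemma besselMomentIntegrable {δ t : ℝ} (hδ : 1 ≤ δ) (ht : 0 < t) (n : ℕ) :
    IntegrableOn (fun y => y ^ (δ - 1) * y ^ (2 * n) * Real.exp (-y ^ 2 / (2 * t)))
      (Set.Ioi (0:ℝ)) := by
  by_contra hnot
  have h0 : ∫ y in Set.Ioi (0:ℝ), y ^ (δ - 1) * y ^ (2 * n) * Real.exp (-y ^ 2 / (2 * t)) = 0 :=
    integral_undef hnot
  rw [besselMoment hδ ht n] at h0
  have h2t : (0:ℝ) < 2 * t := by linarith
  have h1 : (0:ℝ) < (2 * t) ^ (δ / 2 + n) := Real.rpow_pos_of_pos h2t _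
  have h2 : (0:ℝ) < Real.Gamma (δ / 2 + n) := by
    apply Real.Gamma_pos_of_pos
    have : (0:ℝ) ≤ (n:ℝ) := Nat.cast_nonneg n
    linarith
  nlinarith

set_option maxHeartbeats 1000000 in
/-- The intertwining identity identifying the radial restriction of the heat semigroup
as the `δ`-dimensional Bessel semigroup. -/
theorem bessel_intertwining
    (δ : ℝ) (hδ : 1 ≤ δ) (t u x : ℝ) (ht : 0 < t) (hu : 0 < u) :
    Real.exp (-(t * x ^ 2) / 2) * sphBessel (δ / 2 - 1) (u * x) =
      ∫ y in Set.Ioi (0 : ℝ),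
        sphBessel (δ / 2 - 1) (x * y) * besselDensity δ t u y := by
  simp only [besselDensity]
  set s : ℝ := δ / 2 with hs_def
  have hs : 0 < s := by rw [hs_def]; linarith
  have h2t : (0:ℝ) < 2 * t := by linarith
  have hΓs : (0:ℝ) < Real.Gamma s := Real.Gamma_pos_of_pos hs
  set a : ℝ := -(t * x ^ 2 / 2) with ha_def
  set b : ℝ := u ^ 2 / (2 * t) with hb_def
  have hb0 : 0 ≤ b := by rw [hb_def]; positivity
  have habs_a : |a| = t * x ^ 2 / 2 := by rw [ha_def, abs_neg, abs_of_nonneg (by positivity)]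
  set K : ℝ := Real.Gamma s * (2 * (2*t) ^ (-s)) * Real.exp (-(u^2) / (2*t)) with hK_def
  set C : ℕ × ℕ → ℝ := fun mk =>
    K * ((-(x/2)^2) ^ mk.1 * ccB s mk.1 * (((u/(2*t))^2) ^ mk.2 * ccB s mk.2)) with hC_def
  set g : ℕ × ℕ → ℝ → ℝ := fun mk y =>
    C mk * (y ^ (δ - 1) * y ^ (2 * (mk.1 + mk.2)) * Real.exp (-y^2/(2*t))) with hg_def
  -- Step 1 : pointwise series expansion of the integrand
  have step1 : ∀ y : ℝ,
      sphBessel (s - 1) (x * y) *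
        (2 * y ^ (δ - 1) * (2 * t) ^ (-s) / Real.Gamma s *
          sphBesselI (s - 1) (u * y / t) * Real.exp (-(u ^ 2 + y ^ 2) / (2 * t)))
      = ∑' mk : ℕ × ℕ, g mk y := by
    intro y
    rw [sphBessel_eq s (x*y), sphBesselI_eq s (u*y/t)]
    have hmul := tsum_mul_tsum_of_summable_norm
      (summable_norm_pow_mul_ccB hs (-(x*y/2)^2)) (summable_norm_pow_mul_ccB hs ((u*y/t/2)^2))
    set SA := ∑' m : ℕ, (-(x*y/2)^2) ^ m * ccB s m with hSA
    set SB := ∑' k : ℕ, ((u*y/t/2)^2) ^ k * ccB s k with hSB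
    have hre : (Real.Gamma s * SA) *
        (2 * y ^ (δ - 1) * (2 * t) ^ (-s) / Real.Gamma s * (Real.Gamma s * SB) *
          Real.exp (-(u ^ 2 + y ^ 2) / (2 * t)))
        = (Real.Gamma s * (2 * (2*t) ^ (-s)) * Real.exp (-(u ^ 2 + y ^ 2) / (2 * t))
            * y ^ (δ - 1)) * (SA * SB) := by
      field_simp
    rw [hre, hmul, ← tsum_mul_left]
    apply tsum_congr
    rintro ⟨m, k⟩
    simp only [hg_def, hC_def, hK_def]
    have e1 : Real.exp (-(u^2+y^2)/(2*t))
        = Real.exp (-(u^2)/(2*t)) * Real.exp (-y^2/(2*t)) := by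
      rw [← Real.exp_add]
      congr 1
      ring
    have e2 : (-(x*y/2)^2) ^ m = (-(x/2)^2) ^ m * (y^2) ^ m := by
      rw [← mul_pow]
      congr 1
      ring
    have e3 : ((u*y/t/2)^2) ^ k = ((u/(2*t))^2) ^ k * (y^2) ^ k := by
      rw [← mul_pow]
      congr 1
      field_simp
    have e4 : y ^ (2*(m+k)) = (y^2) ^ m * (y^2) ^ k := by
      rw [pow_mul, pow_add]
    rw [e1, e2, e3, e4]
    ring
  -- measurability and integrability of the terms
  have hint : ∀ mk : ℕ × ℕ, IntegrableOn
      (fun y => y ^ (δ - 1) * y ^ (2 * (mk.1 + mk.2)) * Real.exp (-y^2/(2*t)))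
      (Set.Ioi (0:ℝ)) := fun mk => besselMomentIntegrable hδ ht _
  have hgint : ∀ mk : ℕ × ℕ, IntegrableOn (g mk) (Set.Ioi (0:ℝ)) := by
    intro mk
    exact (hint mk).const_mul _
  have hmeas : ∀ mk : ℕ × ℕ, AEStronglyMeasurable (g mk) (volume.restrict (Set.Ioi 0)) :=
    fun mk => (hgint mk).aestronglyMeasurable
  -- value of each integral
  have hIg : ∀ mk : ℕ × ℕ, ∫ y in Set.Ioi (0:ℝ), g mk y
      = C mk * ((2*t) ^ (s + ((mk.1 + mk.2 : ℕ):ℝ)) * (1/2)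
          * Real.Gamma (s + ((mk.1 + mk.2 : ℕ):ℝ))) := by
    intro mk
    simp only [hg_def]
    rw [integral_const_mul, besselMoment hδ ht (mk.1 + mk.2), ← hs_def]
  -- norm integrals
  have hlg : ∀ mk : ℕ × ℕ, ∫ y in Set.Ioi (0:ℝ), ‖g mk y‖
      = |C mk| * ((2*t) ^ (s + ((mk.1 + mk.2 : ℕ):ℝ)) * (1/2)
          * Real.Gamma (s + ((mk.1 + mk.2 : ℕ):ℝ))) := by
    intro mk
    have : ∀ y ∈ Set.Ioi (0:ℝ), ‖g mk y‖
        = |C mk| * (y ^ (δ - 1) * y ^ (2 * (mk.1 + mk.2)) * Real.exp (-y^2/(2*t))) := by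
      intro y hy
      rw [Set.mem_Ioi] at hy
      have hpos : 0 ≤ y ^ (δ - 1) * y ^ (2 * (mk.1 + mk.2)) * Real.exp (-y^2/(2*t)) := by
        have := Real.rpow_pos_of_pos hy (δ - 1)
        positivity
      rw [hg_def]
      simp only []
      rw [Real.norm_eq_abs, abs_mul, abs_of_nonneg hpos]
    rw [setIntegral_congr_fun measurableSet_Ioi this, integral_const_mul,
      besselMoment hδ ht (mk.1 + mk.2), ← hs_def]
  -- the master summable family (values)
  have hDa := besselKey hs a b
  have hDabs := besselKey hs |a| b
  -- pointwise identification of |C mk| * moment with the |a|,b family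
  have hCabs : ∀ mk : ℕ × ℕ,
      |C mk| * ((2*t) ^ (s + ((mk.1 + mk.2 : ℕ):ℝ)) * (1/2)
          * Real.Gamma (s + ((mk.1 + mk.2 : ℕ):ℝ)))
      = (Real.Gamma s * Real.exp (-(u^2) / (2*t))) *
        (|a| ^ mk.1 * b ^ mk.2 * (Real.Gamma (s + mk.1 + mk.2) /
          ((mk.1.factorial : ℝ) * (mk.2.factorial) * Real.Gamma (s + mk.1) *
            Real.Gamma (s + mk.2)))) := by
    rintro ⟨m, k⟩
    simp only [Prod.fst, Prod.snd]
    have hccm := ccB_pos hs m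
    have hcck := ccB_pos hs k
    have habsC : |C (m,k)| = K * (((x/2)^2) ^ m * ccB s m * (((u/(2*t))^2) ^ k * ccB s k)) := by
      have hK0 : 0 ≤ K := by
        rw [hK_def]
        have := Real.rpow_pos_of_pos h2t (-s)
        positivity
      rw [hC_def]
      simp only []
      rw [abs_mul, abs_of_nonneg hK0, abs_mul, abs_mul, abs_mul, abs_pow, abs_pow, abs_neg,
        abs_of_nonneg (sq_nonneg (x/2)), abs_of_nonneg (sq_nonneg (u/(2*t))),
        abs_of_pos hccm, abs_of_pos hcck]
    rw [habsC]
    -- split the rpow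
    have hr : (2*t) ^ (s + ((m + k : ℕ):ℝ)) = (2*t) ^ s * ((2*t) ^ m * (2*t) ^ k) := by
      rw [Real.rpow_add h2t, show (((m + k : ℕ)):ℝ) = (m:ℝ) + (k:ℝ) by push_cast; ring,
        Real.rpow_add h2t, Real.rpow_natCast, Real.rpow_natCast]
    have hΓarg : Real.Gamma (s + ((m + k : ℕ):ℝ)) = Real.Gamma (s + m + k) := by
      congr 1
      push_cast
      ring
    rw [hr, hΓarg, hK_def]
    have hxa : ((x/2)^2) ^ m * (2*t) ^ m = |a| ^ m := by
      rw [← mul_pow, habs_a]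
      congr 1
      ring
    have hub : (((u/(2*t))^2)) ^ k * (2*t) ^ k = b ^ k := by
      rw [← mul_pow, hb_def]
      congr 1
      field_simp
    have hinv : (2*t) ^ (-s) * (2*t) ^ s = 1 := by
      rw [← Real.rpow_add h2t]
      norm_num
    have hccm' : ccB s m = ((m.factorial : ℝ) * Real.Gamma (s + m))⁻¹ := rfl
    have hcck' : ccB s k = ((k.factorial : ℝ) * Real.Gamma (s + k))⁻¹ := rfl
    rw [hccm', hcck', ← hxa, ← hub]
    linear_combination (Real.Gamma s * Real.exp (-(u^2) / (2*t)) *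
      (((x/2)^2)^m * ((m.factorial:ℝ) * Real.Gamma (s+(m:ℝ)))⁻¹) *
      (((u/(2*t))^2)^k * ((k.factorial:ℝ) * Real.Gamma (s+(k:ℝ)))⁻¹) *
      ((2*t)^m * (2*t)^k) * Real.Gamma (s+(m:ℝ)+(k:ℝ))) * hinv
  -- summability of the norm bounds
  have hbound : Summable (fun mk : ℕ × ℕ => |C mk| * ((2*t) ^ (s + ((mk.1 + mk.2 : ℕ):ℝ)) * (1/2)
      * Real.Gamma (s + ((mk.1 + mk.2 : ℕ):ℝ)))) := by
    refine Summable.congr ((hDabs.summable).mul_left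
      (Real.Gamma s * Real.exp (-(u^2) / (2*t)))) ?_
    intro mk
    exact (hCabs mk).symm
  have hbound_nonneg : ∀ mk : ℕ × ℕ, 0 ≤ |C mk| * ((2*t) ^ (s + ((mk.1 + mk.2 : ℕ):ℝ)) * (1/2)
      * Real.Gamma (s + ((mk.1 + mk.2 : ℕ):ℝ))) := by
    intro mk
    have h1 : (0:ℝ) < (2*t) ^ (s + ((mk.1 + mk.2 : ℕ):ℝ)) := Real.rpow_pos_of_pos h2t _
    have h2 : (0:ℝ) < Real.Gamma (s + ((mk.1 + mk.2 : ℕ):ℝ)) := by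
      apply Real.Gamma_pos_of_pos
      have : (0:ℝ) ≤ ((mk.1 + mk.2 : ℕ):ℝ) := Nat.cast_nonneg _
      linarith
    positivity
  have hlint : ∑' mk : ℕ × ℕ, ∫⁻ y in Set.Ioi (0:ℝ), ‖g mk y‖₊ ≠ ⊤ := by
    have heq : ∀ mk : ℕ × ℕ, ∫⁻ y in Set.Ioi (0:ℝ), ‖g mk y‖₊
        = ENNReal.ofReal (|C mk| * ((2*t) ^ (s + ((mk.1 + mk.2 : ℕ):ℝ)) * (1/2)
          * Real.Gamma (s + ((mk.1 + mk.2 : ℕ):ℝ)))) := by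
      intro mk
      rw [show (∫⁻ y in Set.Ioi (0:ℝ), (‖g mk y‖₊ : ENNReal)) = ∫⁻ y in Set.Ioi (0:ℝ), ‖g mk y‖ₑ from rfl,
        ← MeasureTheory.ofReal_integral_norm_eq_lintegral_enorm (hgint mk), hlg mk]
    rw [tsum_congr heq, ← ENNReal.ofReal_tsum_of_nonneg hbound_nonneg hbound]
    exact ENNReal.ofReal_ne_top
  -- signed analogue of hCabs
  have hCsigned : ∀ mk : ℕ × ℕ,
      C mk * ((2*t) ^ (s + ((mk.1 + mk.2 : ℕ):ℝ)) * (1/2)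
          * Real.Gamma (s + ((mk.1 + mk.2 : ℕ):ℝ)))
      = (Real.Gamma s * Real.exp (-(u^2) / (2*t))) *
        (a ^ mk.1 * b ^ mk.2 * (Real.Gamma (s + mk.1 + mk.2) /
          ((mk.1.factorial : ℝ) * (mk.2.factorial) * Real.Gamma (s + mk.1) *
            Real.Gamma (s + mk.2)))) := by
    rintro ⟨m, k⟩
    simp only [Prod.fst, Prod.snd]
    have hr : (2 * t) ^ (s + ((m + k : ℕ):ℝ)) = (2*t) ^ s * ((2*t) ^ m * (2*t) ^ k) := by
      rw [Real.rpow_add h2t, show (((m + k : ℕ)):ℝ) = (m:ℝ) + (k:ℝ) by push_cast; ring,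
        Real.rpow_add h2t, Real.rpow_natCast, Real.rpow_natCast]
    have hΓarg : Real.Gamma (s + ((m + k : ℕ):ℝ)) = Real.Gamma (s + m + k) := by
      congr 1
      push_cast
      ring
    have hxa' : (-(x/2)^2) ^ m * (2*t) ^ m = a ^ m := by
      rw [← mul_pow, ha_def]
      congr 1
      ring
    have hub : (((u/(2*t))^2)) ^ k * (2*t) ^ k = b ^ k := by
      rw [← mul_pow, hb_def]
      congr 1
      field_simp
    have hinv : (2*t) ^ (-s) * (2*t) ^ s = 1 := by
      rw [← Real.rpow_add h2t]
      norm_num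
    have hccm' : ccB s m = ((m.factorial : ℝ) * Real.Gamma (s + m))⁻¹ := rfl
    have hcck' : ccB s k = ((k.factorial : ℝ) * Real.Gamma (s + k))⁻¹ := rfl
    rw [hC_def]
    simp only [Prod.fst, Prod.snd]
    rw [hr, hΓarg, hccm', hcck', ← hxa', ← hub, hK_def]
    linear_combination (Real.Gamma s * Real.exp (-(u^2) / (2*t)) *
      ((-(x/2)^2)^m * ((m.factorial:ℝ) * Real.Gamma (s+(m:ℝ)))⁻¹) *
      (((u/(2*t))^2)^k * ((k.factorial:ℝ) * Real.Gamma (s+(k:ℝ)))⁻¹) *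
      ((2*t)^m * (2*t)^k) * Real.Gamma (s+(m:ℝ)+(k:ℝ))) * hinv
  -- final computation
  calc Real.exp (-(t * x ^ 2) / 2) * sphBessel (s - 1) (u * x)
      = Real.exp a * (Real.Gamma s * ∑' n : ℕ, (-(u*x/2)^2) ^ n * ccB s n) := by
        rw [sphBessel_eq s (u*x), show (-(t * x ^ 2) / 2 : ℝ) = a by rw [ha_def]; ring]
    _ = (Real.Gamma s * Real.exp (-(u^2) / (2*t))) *
        (Real.exp a * (Real.exp b * ∑' n : ℕ, (a*b) ^ n * ccB s n)) := by
        have hab : ∀ n : ℕ, (a*b) ^ n * ccB s n = (-(u*x/2)^2) ^ n * ccB s n := by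
          intro n
          have : a * b = -(u*x/2)^2 := by
            rw [ha_def, hb_def]
            field_simp
          rw [this]
        rw [tsum_congr hab,
          show Real.exp (-(u^2)/(2*t)) = (Real.exp b)⁻¹ by
            rw [← Real.exp_neg]; congr 1; rw [hb_def]; ring]
        field_simp [Real.exp_ne_zero]
    _ = (Real.Gamma s * Real.exp (-(u^2) / (2*t))) *
        ∑' mk : ℕ × ℕ, (a ^ mk.1 * b ^ mk.2 * (Real.Gamma (s + mk.1 + mk.2) /
          ((mk.1.factorial : ℝ) * (mk.2.factorial) * Real.Gamma (s + mk.1) *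
            Real.Gamma (s + mk.2)))) := by
        rw [hDa.tsum_eq]
    _ = ∑' mk : ℕ × ℕ, C mk * ((2*t) ^ (s + ((mk.1 + mk.2 : ℕ):ℝ)) * (1/2)
          * Real.Gamma (s + ((mk.1 + mk.2 : ℕ):ℝ))) := by
        rw [← tsum_mul_left]
        exact tsum_congr fun mk => (hCsigned mk).symm
    _ = ∑' mk : ℕ × ℕ, ∫ y in Set.Ioi (0:ℝ), g mk y :=
        tsum_congr fun mk => (hIg mk).symm
    _ = ∫ y in Set.Ioi (0:ℝ), ∑' mk : ℕ × ℕ, g mk y := (integral_tsum hmeas hlint).symm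
    _ = ∫ y in Set.Ioi (0:ℝ),
          sphBessel (s - 1) (x * y) *
            (2 * y ^ (δ - 1) * (2 * t) ^ (-s) / Real.Gamma s *
              sphBesselI (s - 1) (u * y / t) * Real.exp (-(u ^ 2 + y ^ 2) / (2 * t))) :=
        setIntegral_congr_fun measurableSet_Ioi fun y _ => (step1 y).symm
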